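/- Let n ≥ 2 be an integer, let A ∈ ℝ^{n×n} be symmetric with all diagonal entries zero, and let r ∈ {1,…,n−1}. Then a vector d ∈ ℝⁿ satisfies A + Diag(d) ⪰ 0 and rank(A + Diag(d)) = r if and only if there exist a subset J ⊆ {1,…,n} with |J| = r and a positive definite symmetric matrix V ∈ ℝ^{J×J} such that, writing J̄ := {1,…,n}∖J and A(J,i) ∈ ℝ^J for the subvector of the i-th column of A indexed by J: (1) A(J,i)ᵀ V A(J,j) = A_{ij} for all i, j ∈ J̄ with i ≠ j; (2) A(J,i)ᵀ V A(J,i) = d_i for all i ∈ J̄; (3) (V⁻¹)_{ij} = A_{ij} for all i, j ∈ J with i ≠ j; (4) (V⁻¹)_{ii} = d_i for all i ∈ J. -/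

import Mathlib

open Matrix

private lemma sum_smul_dot' {m ι : Type*} [Fintype m] [Fintype ι] (x : m → ℝ)
    (b : m → (ι → ℝ)) (v : ι → ℝ) :
    (∑ k, x k • b k) ⬝ᵥ v = ∑ k, x k * (b k ⬝ᵥ v) := by
  simp only [dotProduct, Finset.sum_apply, Pi.smul_apply, smul_eq_mul, Finset.sum_mul,
    Finset.mul_sum]
  rw [Finset.sum_comm]
  exact Finset.sum_congr rfl fun k _ => Finset.sum_congr rfl fun i _ => by ring

private lemma dot_sum_smul' {m ι : Type*} [Fintype m] [Fintype ι] (x : m → ℝ)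
    (b : m → (ι → ℝ)) (v : ι → ℝ) :
    v ⬝ᵥ (∑ k, x k • b k) = ∑ k, x k * (v ⬝ᵥ b k) := by
  simp only [dotProduct, Finset.sum_apply, Pi.smul_apply, smul_eq_mul, Finset.sum_mul,
    Finset.mul_sum]
  rw [Finset.sum_comm]
  exact Finset.sum_congr rfl fun k _ => Finset.sum_congr rfl fun i _ => by ring

private lemma dot_expand' {m ι : Type*} [Fintype m] [Fintype ι] (W : Matrix m m ℝ)
    (b : m → (ι → ℝ)) (hW : ∀ k l, W k l = b k ⬝ᵥ b l) (x y : m → ℝ) :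
    x ⬝ᵥ W.mulVec y = (∑ k, x k • b k) ⬝ᵥ (∑ l, y l • b l) := by
  rw [sum_smul_dot']
  simp only [dot_sum_smul']
  simp only [dotProduct, mulVec, hW, Finset.mul_sum]
  refine Finset.sum_congr rfl fun k _ => Finset.sum_congr rfl fun l _ => ?_
  rw [Finset.sum_mul, Finset.mul_sum]
  exact Finset.sum_congr rfl fun i _ => by ring

private lemma conj_entry' {m ι : Type*} [Fintype m] [Fintype ι] (W : Matrix m m ℝ)
    (B : Matrix m ι ℝ) (i j : ι) :
    (Bᴴ * W * B) i j = (fun k => B k i) ⬝ᵥ W.mulVec (fun k => B k j) := by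
  rw [Matrix.mul_assoc]
  simp only [Matrix.mul_apply, conjTranspose_apply, star_trivial, dotProduct, mulVec]

/-- Characterization of feasible solutions of `(P₂)` with objective
value `r` via the system (char_sys). -/
theorem stmt4 (n : ℕ) (hn : 2 ≤ n) (A : Matrix (Fin n) (Fin n) ℝ) (hA : A.IsSymm)
    (hdiag : ∀ i, A i i = 0) (r : ℕ) (hr1 : 1 ≤ r) (hr2 : r ≤ n - 1) (d : Fin n → ℝ) :
    ((A + Matrix.diagonal d).PosSemidef ∧ (A + Matrix.diagonal d).rank = r) ↔
      ∃ J : Finset (Fin n), J.card = r ∧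
        ∃ V : Matrix J J ℝ, V.PosDef ∧
          (∀ i j : Fin n, i ∉ J → j ∉ J → i ≠ j →
            (fun k : J => A k.val i) ⬝ᵥ V.mulVec (fun l : J => A l.val j) = A i j) ∧
          (∀ i : Fin n, i ∉ J →
            (fun k : J => A k.val i) ⬝ᵥ V.mulVec (fun l : J => A l.val i) = d i) ∧
          (∀ i j : J, i ≠ j → V⁻¹ i j = A i.val j.val) ∧
          (∀ i : J, V⁻¹ i i = d i.val) := by
  classical
  set M : Matrix (Fin n) (Fin n) ℝ := A + Matrix.diagonal d with hM
  have hMoff : ∀ i j, i ≠ j → M i j = A i j := by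
    intro i j hij
    simp [hM, Matrix.add_apply, Matrix.diagonal_apply_ne _ hij]
  have hMdiag : ∀ i, M i i = d i := by
    intro i
    simp [hM, Matrix.add_apply, Matrix.diagonal_apply_eq, hdiag i]
  have hMsymm : ∀ i j, M i j = M j i := by
    intro i j
    by_cases hij : i = j
    · subst hij; rfl
    · rw [hMoff i j hij, hMoff j i (Ne.symm hij), hA.apply i j]
  constructor
  · rintro ⟨hpsd, hrank⟩
    obtain ⟨B, hB⟩ : ∃ B : Matrix (Fin n) (Fin n) ℝ, M = Bᴴ * B := by
      open scoped MatrixOrder in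
      obtain ⟨B, hB⟩ := CStarAlgebra.nonneg_iff_eq_star_mul_self.mp hpsd.nonneg
      exact ⟨B, hB⟩
    set b : Fin n → (Fin n → ℝ) := fun i k => B k i with hbdef
    have hdot : ∀ i j, b i ⬝ᵥ b j = M i j := by
      intro i j
      rw [hB]
      simp [Matrix.mul_apply, Matrix.conjTranspose_apply, dotProduct, hbdef]
    have hrankB : B.rank = r := by
      rw [← Matrix.rank_conjTranspose_mul_self, ← hB, hrank]
    have hrange : Set.range Bᵀ = Set.range b := by
      congr 1
    have hspanrank : Module.finrank ℝ (Submodule.span ℝ (Set.range b)) = r := by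
      rw [← hrange, show Set.range Bᵀ = Set.range B.col from rfl, ← Matrix.rank_eq_finrank_span_cols, hrankB]
    obtain ⟨t, hts, htspan, htli⟩ := exists_linearIndependent ℝ (Set.range b)
    have htfin : t.Finite := (Set.finite_range b).subset hts
    haveI : Fintype t := htfin.fintype
    -- choose preimages
    have hgex : ∀ x : t, ∃ i : Fin n, b i = x := fun x => hts x.2
    choose g hg using hgex
    have hginj : Function.Injective g := by
      intro x y hxy
      have : (x : Fin n → ℝ) = y := by rw [← hg x, ← hg y, hxy]
      exact Subtype.ext this
    set J : Finset (Fin n) := Finset.image g Finset.univ with hJdef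
    have hmemJ : ∀ k : Fin n, k ∈ J → b k ∈ t := by
      intro k hk
      rw [hJdef, Finset.mem_image] at hk
      obtain ⟨x, -, rfl⟩ := hk
      rw [hg x]
      exact x.2
    have hJcard : J.card = r := by
      rw [hJdef, Finset.card_image_of_injective _ hginj, Finset.card_univ,
        ← Set.toFinset_card]
      rw [← finrank_span_set_eq_card htli, htspan, hspanrank]
    -- b restricted to J is linearly independent
    have hbJmem : ∀ k : J, b k.val ∈ t := fun k => hmemJ k.val k.2
    set e : J → t := fun k => ⟨b k.val, hbJmem k⟩ with hedef
    have heinj : Function.Injective e := by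
      intro k k' hkk'
      have hb : b k.val = b k'.val := congrArg Subtype.val hkk'
      -- k = g x for some x
      obtain ⟨x, -, hx⟩ := Finset.mem_image.mp k.2
      obtain ⟨x', -, hx'⟩ := Finset.mem_image.mp k'.2
      have : x = x' := by
        apply Subtype.ext
        rw [← hg x, ← hg x', hx, hx', hb]
      exact Subtype.ext (by rw [← hx, ← hx', this])
    have hbJli : LinearIndependent ℝ (fun k : J => b k.val) := by
      have : (fun k : J => b k.val) = (fun x : t => (x : Fin n → ℝ)) ∘ e := rfl
      rw [this]
      exact htli.comp e heinj
    -- every column lies in the span of the J-columns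
    have hrangeeq : Set.range (fun k : J => b k.val) = t := by
      apply Set.eq_of_subset_of_subset
      · rintro x ⟨k, rfl⟩; exact hbJmem k
      · intro x hx
        refine ⟨⟨g ⟨x, hx⟩, Finset.mem_image.mpr ⟨⟨x, hx⟩, Finset.mem_univ _, rfl⟩⟩, ?_⟩
        exact hg ⟨x, hx⟩
    have hmemspan : ∀ i, b i ∈ Submodule.span ℝ (Set.range (fun k : J => b k.val)) := by
      intro i
      rw [hrangeeq, htspan]
      exact Submodule.subset_span ⟨i, rfl⟩
    have hcex : ∀ i, ∃ c : J → ℝ, (∑ k : J, c k • b k.val) = b i := by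
      intro i
      exact (Submodule.mem_span_range_iff_exists_fun ℝ).mp (hmemspan i)
    choose c hc using hcex
    -- the Gram matrix
    set W : Matrix J J ℝ := Matrix.of (fun k l : J => M k.val l.val) with hWdef
    have hWgram : ∀ k l : J, W k l = b k.val ⬝ᵥ b l.val := by
      intro k l
      rw [hWdef, Matrix.of_apply, ← hdot]
    have hWherm : W.IsHermitian := by
      ext k l
      simp only [Matrix.conjTranspose_apply, star_trivial, hWdef, Matrix.of_apply]
      exact hMsymm l.val k.val
    have hWpd : W.PosDef := by
      refine Matrix.posDef_iff_dotProduct_mulVec.mpr ⟨hWherm, fun x hx => ?_⟩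
      have hexp := dot_expand' W (fun k : J => b k.val) hWgram x x
      have hu0 : (∑ k : J, x k • b k.val) ≠ 0 := by
        intro h0
        apply hx
        funext k
        exact Fintype.linearIndependent_iff.mp hbJli x h0 k
      have hpos : 0 < (∑ k : J, x k • b k.val) ⬝ᵥ (∑ l : J, x l • b l.val) := by
        have hnn : (0:ℝ) ≤ (∑ k : J, x k • b k.val) ⬝ᵥ (∑ l : J, x l • b l.val) :=
          Finset.sum_nonneg fun i _ => mul_self_nonneg _
        rcases lt_or_eq_of_le hnn with h | h
        · exact h
        · exact absurd (dotProduct_self_eq_zero.mp h.symm) hu0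
      simpa [star_trivial, hexp] using hpos
    have hWdet : IsUnit W.det := isUnit_iff_ne_zero.mpr hWpd.det_pos.ne'
    have hAM : ∀ (i : Fin n), i ∉ J → (fun k : J => A k.val i) = (fun k : J => M k.val i) := by
      intro i hi
      funext k
      exact (hMoff _ _ (fun h : (k:Fin n) = i => hi (h ▸ k.2))).symm
    have hkey : ∀ i : Fin n, (fun k : J => M k.val i) = W.mulVec (c i) := by
      intro i
      funext k
      have : M k.val i = b k.val ⬝ᵥ b i := (hdot _ _).symm
      rw [this, ← hc i, dot_sum_smul']
      simp only [Matrix.mulVec, dotProduct, hWgram]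
      exact Finset.sum_congr rfl fun l _ => by rw [mul_comm]
    have hVc : ∀ i : Fin n, W⁻¹.mulVec (fun k : J => M k.val i) = c i := by
      intro i
      rw [hkey, Matrix.mulVec_mulVec, Matrix.nonsing_inv_mul W hWdet, Matrix.one_mulVec]
    have hmain : ∀ i j : Fin n, i ∉ J → j ∉ J →
        (fun k : J => A k.val i) ⬝ᵥ (W⁻¹).mulVec (fun l : J => A l.val j) = M i j := by
      intro i j hi hj
      rw [hAM i hi, hAM j hj, hVc j, hkey i, dotProduct_comm,
        dot_expand' W (fun k : J => b k.val) hWgram (c j) (c i), hc, hc, hdot, hMsymm]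
    refine ⟨J, hJcard, W⁻¹, hWpd.inv, ?_, ?_, ?_, ?_⟩
    · intro i j hi hj hij
      rw [hmain i j hi hj, hMoff _ _ hij]
    · intro i hi
      rw [hmain i i hi hi, hMdiag]
    · intro i j hij
      rw [Matrix.nonsing_inv_nonsing_inv W hWdet, hWdef, Matrix.of_apply,
        hMoff _ _ (fun h => hij (Subtype.ext h))]
    · intro i
      rw [Matrix.nonsing_inv_nonsing_inv W hWdet, hWdef, Matrix.of_apply, hMdiag]
  · rintro ⟨J, hJcard, V, hV, h1, h2, h3, h4⟩
    have hVdet : IsUnit V.det := isUnit_iff_ne_zero.mpr hV.det_pos.ne'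
    set W : Matrix J J ℝ := V⁻¹ with hWdef
    have hW : W.PosDef := hV.inv
    have hWsymm : ∀ k l, W k l = W l k := fun k l => by
      have := hW.isHermitian.apply l k
      simpa using this
    have hVW : V * W = 1 := Matrix.mul_nonsing_inv V hVdet
    have hWV : W * V = 1 := Matrix.nonsing_inv_mul V hVdet
    -- the columns used for non-J indices
    set b : Fin n → (J → ℝ) := fun i k => A k.val i with hbdef
    set u : Fin n → (J → ℝ) := fun i =>
      if h : i ∈ J then Pi.single (⟨i, h⟩ : J) 1 else V.mulVec (b i) with hudef
    set B : Matrix J (Fin n) ℝ := Matrix.of (fun k i => u i k) with hBdef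
    -- entries of the conjugated matrix
    have hentry : ∀ i j, (Bᴴ * W * B) i j = u i ⬝ᵥ W.mulVec (u j) := by
      intro i j
      have := conj_entry' W B i j
      exact this
    -- key computation for i ∈ J
    have key : ∀ i j, (hi : i ∈ J) → (Bᴴ * W * B) i j = M i j := by
      intro i j hi
      rw [hentry]
      have hui : u i = Pi.single (⟨i, hi⟩ : J) 1 := by simp [hudef, hi]
      rw [hui, single_dotProduct, one_mul]
      by_cases hj : j ∈ J
      · have huj : u j = Pi.single (⟨j, hj⟩ : J) 1 := by simp [hudef, hj]
        rw [huj, Matrix.mulVec_single]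
        simp only [MulOpposite.op_one, one_smul, Matrix.col_apply]
        by_cases hij : i = j
        · subst hij
          have : (⟨i, hi⟩ : J) = ⟨i, hj⟩ := rfl
          rw [this]
          rw [show W (⟨i, hj⟩ : J) ⟨i, hj⟩ = d i from h4 ⟨i, hj⟩]
          exact (hMdiag i).symm
        · have hne : (⟨i, hi⟩ : J) ≠ ⟨j, hj⟩ := by
            intro h; exact hij (congrArg Subtype.val h)
          rw [show W (⟨i, hi⟩ : J) ⟨j, hj⟩ = A i j from h3 ⟨i, hi⟩ ⟨j, hj⟩ hne]
          exact (hMoff i j hij).symm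
      · have huj : u j = V.mulVec (b j) := by simp [hudef, hj]
        rw [huj, Matrix.mulVec_mulVec, hWV, Matrix.one_mulVec]
        have hij : i ≠ j := fun h => hj (h ▸ hi)
        exact (hbdef ▸ (hMoff i j hij).symm)
    -- symmetry of the conjugated matrix
    have hherm : (Bᴴ * W * B).IsHermitian :=
      Matrix.isHermitian_conjTranspose_mul_mul B hW.isHermitian
    have hsymm2 : ∀ i j, (Bᴴ * W * B) i j = (Bᴴ * W * B) j i := by
      intro i j
      have := hherm.apply j i
      simpa using this
    -- the case both outside J
    have key2 : ∀ i j, i ∉ J → j ∉ J → (Bᴴ * W * B) i j = M i j := by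
      intro i j hi hj
      rw [hentry]
      have hui : u i = V.mulVec (b i) := by simp [hudef, hi]
      have huj : u j = V.mulVec (b j) := by simp [hudef, hj]
      rw [hui, huj, Matrix.mulVec_mulVec, hWV, Matrix.one_mulVec, dotProduct_comm]
      by_cases hij : i = j
      · subst hij
        rw [show b i ⬝ᵥ V.mulVec (b i) = d i from h2 i hi, hMdiag]
      · rw [show b j ⬝ᵥ V.mulVec (b i) = A j i from h1 j i hj hi (Ne.symm hij),
          ← hA.apply j i, hMoff i j hij]
    -- M equals the conjugated matrix
    have hMeq : M = Bᴴ * W * B := by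
      ext i j
      by_cases hi : i ∈ J
      · exact (key i j hi).symm
      · by_cases hj : j ∈ J
        · rw [hMsymm i j, hsymm2 i j]; exact (key j i hj).symm
        · exact (key2 i j hi hj).symm
    have hpsd : M.PosSemidef := hMeq ▸ hW.posSemidef.conjTranspose_mul_mul_same B
    refine ⟨hpsd, ?_⟩
    -- the rank computation
    obtain ⟨C, hC⟩ : ∃ C : Matrix J J ℝ, W = Cᴴ * C := by
      open scoped MatrixOrder in
      obtain ⟨C, hC⟩ := CStarAlgebra.nonneg_iff_eq_star_mul_self.mp hW.posSemidef.nonneg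
      exact ⟨C, hC⟩
    have hCdet : IsUnit C.det := by
      have hdetW : W.det = C.det * C.det := by
        rw [hC, Matrix.det_mul]
        congr 1
        rw [Matrix.det_conjTranspose]
        simp
      refine isUnit_iff_ne_zero.mpr fun h => ?_
      rw [h, mul_zero] at hdetW
      exact hW.det_pos.ne' hdetW
    have hMfact : M = (C * B)ᴴ * (C * B) := by
      rw [hMeq, hC, Matrix.conjTranspose_mul, Matrix.mul_assoc, Matrix.mul_assoc, Matrix.mul_assoc]
    have hrk : M.rank = (C * B).rank := by rw [hMfact, Matrix.rank_conjTranspose_mul_self]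
    have hrkCB : (C * B).rank = B.rank := Matrix.rank_mul_eq_right_of_isUnit_det C B hCdet
    -- rank of B is the cardinality of J
    set S : Matrix (Fin n) J ℝ := Matrix.of (fun i k => if i = k.val then 1 else 0) with hSdef
    have hBS : B * S = 1 := by
      ext k l
      simp only [Matrix.mul_apply, hSdef, Matrix.of_apply, mul_ite, mul_one, mul_zero]
      rw [Finset.sum_ite_eq' Finset.univ (l.val) (fun i => B k i)]
      simp only [Finset.mem_univ, if_true]
      have : u (l.val) = Pi.single l 1 := by
        simp [hudef, l.2]
      simp [hBdef, this, Pi.single_apply, Matrix.one_apply, eq_comm]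
    have hBrank_le : B.rank ≤ J.card := by
      have := Matrix.rank_le_card_height B
      simpa [Fintype.card_coe] using this
    have hBrank_ge : J.card ≤ B.rank := by
      have h1r : (B * S).rank = J.card := by
        rw [hBS, Matrix.rank_one, Fintype.card_coe]
      calc J.card = (B * S).rank := h1r.symm
        _ ≤ B.rank := Matrix.rank_mul_le_left B S
    rw [hrk, hrkCB, le_antisymm hBrank_le hBrank_ge, hJcard]
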